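/- Let X be a Banach space, I a discrete interval unbounded below, ρ > 0, and let F_t = L_t + N_t : U_t → U_{t+1} be semilinear with ‖Φ(t,s)‖ ≤ K·∏_{r=s}^{t-1} α_r for all s ≤ t (K ≥ 1, α_t ≥ 0, Φ the transition operator of (L_t)) and ‖N_t(u)‖ ≤ b_t + a_t‖u‖ for all t ∈ I', u ∈ U_t (a_t, b_t ≥ 0). If for every τ ∈ I one has lim_{s→∞} ∏_{r=τ−s}^{τ−1}(α_r + K a_r) = 0 and R_τ := K·∑_{s=−∞}^{τ−1} b_s·∏_{r=s+1}^{τ−1}(α_r + K a_r) < ∞, then (Δ) is pullback dissipative with pullback absorbing set 𝓐 := {(τ,u) : u ∈ U_τ, ‖u‖ ≤ ρ + R_τ}: for every τ ∈ I and every bounded nonautonomous set 𝓑 there is S ∈ ℕ with φ(τ;τ−s,𝓑(τ−s)) ⊆ 𝓐(τ) for all s ≥ S. If moreover lim_{s→∞} sup_{τ∈I} ∏_{r=τ−s}^{τ−1}(α_r + K a_r) = 0, then the absorption time S can be chosen independent of τ, i.e. (Δ) is uniformly pullback dissipative. -/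

import Mathlib

open Filter Topology Metric Bornology

/-- Iterates of a nonautonomous difference equation: `sol F τ u n = φ(τ+n; τ, u)`. -/
def sol {X : Type*} (F : ℤ → X → X) (τ : ℤ) (u : X) : ℕ → X
  | 0 => u
  | n + 1 => F (τ + (n : ℤ)) (sol F τ u n)

/-- General solution `φ(t; τ, u)` of the difference equation `u_{t+1} = F_t(u_t)`. -/
def phi {X : Type*} (F : ℤ → X → X) (t τ : ℤ) (u : X) : X :=
  sol F τ u (t - τ).toNat

/-- Transition operator: `transOp L s n = Φ(s+n, s) = L_{s+n-1} ⋯ L_s`. -/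
def transOp {X : Type*} [NormedAddCommGroup X] [NormedSpace ℝ X]
    (L : ℤ → X →L[ℝ] X) (s : ℤ) : ℕ → (X →L[ℝ] X)
  | 0 => ContinuousLinearMap.id ℝ X
  | n + 1 => (L (s + (n : ℤ))).comp (transOp L s n)

/-- Recursive Gronwall majorant. -/
def Gaux (g0 : ℝ) (c e : ℕ → ℝ) : ℕ → ℝ
  | 0 => g0
  | n + 1 => c n * Gaux g0 c e n + e n

lemma Gaux_closed (g0 : ℝ) (c e : ℕ → ℝ) (n : ℕ) :
    Gaux g0 c e n = (∏ r ∈ Finset.range n, c r) * g0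
      + ∑ m ∈ Finset.range n, e m * ∏ r ∈ Finset.Ico (m + 1) n, c r := by
  induction n with
  | zero => simp [Gaux]
  | succ n ih =>
      rw [show Gaux g0 c e (n+1) = c n * Gaux g0 c e n + e n from rfl, ih,
        Finset.prod_range_succ, Finset.sum_range_succ]
      rw [Finset.Ico_self, Finset.prod_empty]
      have hsum : ∑ m ∈ Finset.range n, e m * ∏ r ∈ Finset.Ico (m + 1) (n + 1), c r
          = ∑ m ∈ Finset.range n, (e m * ∏ r ∈ Finset.Ico (m + 1) n, c r) * c n := by
        refine Finset.sum_congr rfl fun m hm => ?_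
        rw [Finset.prod_Ico_succ_top (Finset.mem_range.mp hm), mul_assoc]
      rw [hsum, ← Finset.sum_mul]
      ring

lemma W_le_Gaux (g0 : ℝ) (A q d : ℕ → ℝ) (hA : ∀ n, 0 ≤ A n) (hq : ∀ n, 0 ≤ q n) (n : ℕ) :
    (∏ r ∈ Finset.range n, A r) * g0
      + ∑ m ∈ Finset.range n, (∏ r ∈ Finset.Ico (m + 1) n, A r)
          * (d m + q m * Gaux g0 (fun r => A r + q r) d m)
      ≤ Gaux g0 (fun r => A r + q r) d n := by
  induction n with
  | zero => simp [Gaux]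
  | succ n ih =>
      rw [Finset.prod_range_succ, Finset.sum_range_succ, Finset.Ico_self, Finset.prod_empty]
      have hsum : ∑ m ∈ Finset.range n, (∏ r ∈ Finset.Ico (m + 1) (n + 1), A r)
            * (d m + q m * Gaux g0 (fun r => A r + q r) d m)
          = A n * ∑ m ∈ Finset.range n, (∏ r ∈ Finset.Ico (m + 1) n, A r)
            * (d m + q m * Gaux g0 (fun r => A r + q r) d m) := by
        rw [Finset.mul_sum]
        refine Finset.sum_congr rfl fun m hm => ?_
        rw [Finset.prod_Ico_succ_top (Finset.mem_range.mp hm)]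
        ring
      rw [hsum]
      have h1 : A n * ((∏ r ∈ Finset.range n, A r) * g0)
            + A n * ∑ m ∈ Finset.range n, (∏ r ∈ Finset.Ico (m + 1) n, A r)
              * (d m + q m * Gaux g0 (fun r => A r + q r) d m)
          ≤ A n * Gaux g0 (fun r => A r + q r) d n := by
        rw [← mul_add]
        exact mul_le_mul_of_nonneg_left ih (hA n)
      have hG : Gaux g0 (fun r => A r + q r) d (n+1)
          = (A n + q n) * Gaux g0 (fun r => A r + q r) d n + d n := rfl
      rw [hG]
      nlinarith [hq n]

lemma Ico_int_map (σ : ℤ) (p n : ℕ) :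
    Finset.Ico (σ + (p : ℤ)) (σ + (n : ℤ))
      = (Finset.Ico p n).map ⟨fun m : ℕ => σ + (m : ℤ), fun x y h => by simp at h; omega⟩ := by
  ext x
  simp only [Finset.mem_map, Finset.mem_Ico, Function.Embedding.coeFn_mk]
  constructor
  · intro h; exact ⟨(x - σ).toNat, by omega, by show σ + ((x - σ).toNat : ℤ) = x; omega⟩
  · rintro ⟨m, hm, rfl⟩; change σ + (p : ℤ) ≤ σ + (m : ℤ) ∧ σ + (m : ℤ) < σ + (n : ℤ); omega

lemma prod_shift (f : ℤ → ℝ) (σ : ℤ) (p n : ℕ) :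
    ∏ r ∈ Finset.Ico (σ + (p : ℤ)) (σ + (n : ℤ)), f r
      = ∏ m ∈ Finset.Ico p n, f (σ + (m : ℤ)) := by
  rw [Ico_int_map σ p n, Finset.prod_map]
  rfl

lemma sum_shift (f : ℤ → ℝ) (σ : ℤ) (p n : ℕ) :
    ∑ r ∈ Finset.Ico (σ + (p : ℤ)) (σ + (n : ℤ)), f r
      = ∑ m ∈ Finset.Ico p n, f (σ + (m : ℤ)) := by
  rw [Ico_int_map σ p n, Finset.sum_map]
  rfl

lemma varconst {X : Type*} [NormedAddCommGroup X] [NormedSpace ℝ X]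
    (L : ℤ → X →L[ℝ] X) (N F : ℤ → X → X) (σ : ℤ) (u : X) (n : ℕ)
    (h : ∀ m : ℕ, m < n → F (σ + (m : ℤ)) (sol F σ u m)
        = L (σ + (m : ℤ)) (sol F σ u m) + N (σ + (m : ℤ)) (sol F σ u m)) :
    sol F σ u n = transOp L σ n u
      + ∑ m ∈ Finset.range n,
          transOp L (σ + (m : ℤ) + 1) (n - (m + 1)) (N (σ + (m : ℤ)) (sol F σ u m)) := by
  induction n with
  | zero => simp [sol, transOp]
  | succ n ih =>
      have hstep : sol F σ u (n + 1) = F (σ + (n : ℤ)) (sol F σ u n) := rfl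
      have hexp : (L (σ + (n : ℤ))) (sol F σ u n)
          = transOp L σ (n + 1) u
            + ∑ m ∈ Finset.range n,
                transOp L (σ + (m : ℤ) + 1) ((n + 1) - (m + 1))
                  (N (σ + (m : ℤ)) (sol F σ u m)) := by
        rw [ih (fun m hm => h m (hm.trans (Nat.lt_succ_self n))), map_add, map_sum]
        congr 1
        refine Finset.sum_congr rfl fun m hm => ?_
        have hm' : m < n := Finset.mem_range.mp hm
        have hcast : σ + (n : ℤ) = (σ + (m : ℤ) + 1) + ((n - (m + 1) : ℕ) : ℤ) := by omega
        have h2 : (L (σ + (n : ℤ))) (transOp L (σ + (m : ℤ) + 1) (n - (m + 1))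
              (N (σ + (m : ℤ)) (sol F σ u m)))
            = transOp L (σ + (m : ℤ) + 1) ((n - (m + 1)) + 1)
              (N (σ + (m : ℤ)) (sol F σ u m)) := by
          rw [show transOp L (σ + (m : ℤ) + 1) ((n - (m + 1)) + 1)
              = (L ((σ + (m : ℤ) + 1) + ((n - (m + 1) : ℕ) : ℤ))).comp
                (transOp L (σ + (m : ℤ) + 1) (n - (m + 1))) from rfl, ← hcast]
          rfl
        have hk : (n + 1) - (m + 1) = (n - (m + 1)) + 1 := by omega
        rw [hk, h2]
      have hlast : transOp L (σ + (n : ℤ) + 1) ((n + 1) - (n + 1))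
            (N (σ + (n : ℤ)) (sol F σ u n)) = N (σ + (n : ℤ)) (sol F σ u n) := by
        norm_num [transOp]
      rw [hstep, h n (Nat.lt_succ_self n), hexp, Finset.sum_range_succ, hlast, add_assoc]

lemma core {X : Type*} [NormedAddCommGroup X] [NormedSpace ℝ X]
    (I : Set ℤ) (U : ℤ → Set X) (L : ℤ → X →L[ℝ] X) (N : ℤ → X → X) (F : ℤ → X → X)
    (hF : ∀ t, t ∈ I → t + 1 ∈ I → ∀ u ∈ U t, F t u = L t u + N t u)
    (hFmap : ∀ t, t ∈ I → t + 1 ∈ I → ∀ u ∈ U t, F t u ∈ U (t + 1))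
    (K : ℝ) (hK : 1 ≤ K) (α : ℤ → ℝ) (hα : ∀ t, 0 ≤ α t)
    (hΦ : ∀ s t : ℤ, s ∈ I → t ∈ I → s ≤ t →
      ‖transOp L s (t - s).toNat‖ ≤ K * ∏ r ∈ Finset.Ico s t, α r)
    (a b : ℤ → ℝ) (ha : ∀ t, 0 ≤ a t) (hb : ∀ t, 0 ≤ b t)
    (hN : ∀ t, t ∈ I → t + 1 ∈ I → ∀ u ∈ U t, ‖N t u‖ ≤ b t + a t * ‖u‖)
    (τ : ℤ) (hτ : τ ∈ I) (hdown : ∀ t : ℤ, t ≤ τ → t ∈ I)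
    (s : ℕ) (u : X) (hu : u ∈ U (τ - (s : ℤ))) :
    sol F (τ - (s : ℤ)) u s ∈ U τ ∧
    ‖sol F (τ - (s : ℤ)) u s‖
      ≤ K * (∏ r ∈ Finset.Ico (τ - (s : ℤ)) τ, (α r + K * a r)) * ‖u‖
        + K * ∑ t ∈ Finset.Ico (τ - (s : ℤ)) τ,
            b t * ∏ r ∈ Finset.Ico (t + 1) τ, (α r + K * a r) := by
  set σ : ℤ := τ - (s : ℤ) with hσ
  have hK0 : (0:ℝ) ≤ K := le_trans zero_le_one hK
  have hc : ∀ r : ℤ, 0 ≤ α r + K * a r := fun r => add_nonneg (hα r) (mul_nonneg hK0 (ha r))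
  -- membership
  have hmem : ∀ n : ℕ, n ≤ s → sol F σ u n ∈ U (σ + (n : ℤ)) := by
    intro n
    induction n with
    | zero => intro _; simpa [sol] using hu
    | succ n ih =>
        intro hn
        have h1 : sol F σ u (n + 1) = F (σ + (n : ℤ)) (sol F σ u n) := rfl
        have h2 := hFmap (σ + (n : ℤ)) (hdown _ (by omega)) (hdown _ (by omega))
          _ (ih (by omega))
        rw [h1, show σ + ((n + 1 : ℕ) : ℤ) = σ + (n : ℤ) + 1 by push_cast; ring]
        exact h2
  -- key Gronwall estimate
  have key : ∀ n : ℕ, n ≤ s → ‖sol F σ u n‖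
      ≤ Gaux (K * ‖u‖) (fun r => α (σ + (r : ℤ)) + K * a (σ + (r : ℤ)))
          (fun m => K * b (σ + (m : ℤ))) n := by
    intro n
    induction n using Nat.strong_induction_on with
    | _ n IH =>
      intro hn
      have hvc := varconst L N F σ u n (fun m hm =>
        hF (σ + (m : ℤ)) (hdown _ (by omega)) (hdown _ (by omega)) _
          (hmem m (le_of_lt (lt_of_lt_of_le hm hn))))
      have hT0 : ‖transOp L σ n‖ ≤ K * ∏ m ∈ Finset.range n, α (σ + (m : ℤ)) := by
        have h0 := hΦ σ (σ + (n : ℤ)) (hdown _ (by omega)) (hdown _ (by omega)) (by omega)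
        rw [show ((σ + (n : ℤ)) - σ).toNat = n by omega] at h0
        have hp : ∏ r ∈ Finset.Ico σ (σ + (n : ℤ)), α r
            = ∏ m ∈ Finset.range n, α (σ + (m : ℤ)) := by
          rw [Finset.range_eq_Ico, ← prod_shift α σ 0 n]
          norm_num
        rwa [hp] at h0
      have hTm : ∀ m : ℕ, m < n → ‖transOp L (σ + (m : ℤ) + 1) (n - (m + 1))‖
          ≤ K * ∏ r ∈ Finset.Ico (m + 1) n, α (σ + (r : ℤ)) := by
        intro m hm
        have h0 := hΦ (σ + (m : ℤ) + 1) (σ + (n : ℤ)) (hdown _ (by omega))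
          (hdown _ (by omega)) (by omega)
        rw [show ((σ + (n : ℤ)) - (σ + (m : ℤ) + 1)).toNat = n - (m + 1) by omega] at h0
        have hp : ∏ r ∈ Finset.Ico (σ + (m : ℤ) + 1) (σ + (n : ℤ)), α r
            = ∏ r ∈ Finset.Ico (m + 1) n, α (σ + (r : ℤ)) := by
          rw [← prod_shift α σ (m + 1) n]
          congr 1
          push_cast
          ring
        rwa [hp] at h0
      have hNm : ∀ m : ℕ, m < n → ‖N (σ + (m : ℤ)) (sol F σ u m)‖
          ≤ b (σ + (m : ℤ)) + a (σ + (m : ℤ)) * ‖sol F σ u m‖ := fun m hm =>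
        hN (σ + (m : ℤ)) (hdown _ (by omega)) (hdown _ (by omega)) _
          (hmem m (le_of_lt (lt_of_lt_of_le hm hn)))
      calc ‖sol F σ u n‖
          ≤ ‖transOp L σ n u‖ + ∑ m ∈ Finset.range n,
              ‖transOp L (σ + (m : ℤ) + 1) (n - (m + 1)) (N (σ + (m : ℤ)) (sol F σ u m))‖ := by
            rw [hvc]
            exact (norm_add_le _ _).trans (add_le_add_right (norm_sum_le _ _) _)
        _ ≤ (∏ m ∈ Finset.range n, α (σ + (m : ℤ))) * (K * ‖u‖)
            + ∑ m ∈ Finset.range n, (∏ r ∈ Finset.Ico (m + 1) n, α (σ + (r : ℤ)))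
                * ((fun m : ℕ => K * b (σ + (m : ℤ))) m
                  + (K * a (σ + (m : ℤ)))
                    * Gaux (K * ‖u‖) (fun r => α (σ + (r : ℤ)) + K * a (σ + (r : ℤ)))
                        (fun m => K * b (σ + (m : ℤ))) m) := by
            refine add_le_add ?_ (Finset.sum_le_sum fun m hm => ?_)
            · calc ‖transOp L σ n u‖ ≤ ‖transOp L σ n‖ * ‖u‖ :=
                    ContinuousLinearMap.le_opNorm _ _
                _ ≤ (K * ∏ m ∈ Finset.range n, α (σ + (m : ℤ))) * ‖u‖ :=
                    mul_le_mul_of_nonneg_right hT0 (norm_nonneg _)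
                _ = (∏ m ∈ Finset.range n, α (σ + (m : ℤ))) * (K * ‖u‖) := by ring
            · have hm' : m < n := Finset.mem_range.mp hm
              have hprodnn : (0:ℝ) ≤ ∏ r ∈ Finset.Ico (m + 1) n, α (σ + (r : ℤ)) :=
                Finset.prod_nonneg fun r _ => hα _
              calc ‖transOp L (σ + (m : ℤ) + 1) (n - (m + 1)) (N (σ + (m : ℤ)) (sol F σ u m))‖
                  ≤ ‖transOp L (σ + (m : ℤ) + 1) (n - (m + 1))‖ * ‖N (σ + (m : ℤ)) (sol F σ u m)‖ :=
                    ContinuousLinearMap.le_opNorm _ _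
                _ ≤ (K * ∏ r ∈ Finset.Ico (m + 1) n, α (σ + (r : ℤ)))
                      * (b (σ + (m : ℤ)) + a (σ + (m : ℤ)) * ‖sol F σ u m‖) :=
                    mul_le_mul (hTm m hm') (hNm m hm') (norm_nonneg _) (mul_nonneg hK0 (Finset.prod_nonneg fun r _ => hα _))
                _ = (∏ r ∈ Finset.Ico (m + 1) n, α (σ + (r : ℤ)))
                      * (K * b (σ + (m : ℤ)) + (K * a (σ + (m : ℤ))) * ‖sol F σ u m‖) := by
                    ring
                _ ≤ _ := by
                    refine mul_le_mul_of_nonneg_left (add_le_add_right ?_ _) hprodnn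
                    exact mul_le_mul_of_nonneg_left
                      (IH m hm' (le_of_lt (lt_of_lt_of_le hm' hn))) (mul_nonneg hK0 (ha _))
        _ ≤ _ := W_le_Gaux (K * ‖u‖) (fun r => α (σ + (r : ℤ))) (fun r => K * a (σ + (r : ℤ)))
              (fun m => K * b (σ + (m : ℤ))) (fun r => hα _) (fun r => mul_nonneg hK0 (ha _)) n
  constructor
  · have := hmem s le_rfl
    rwa [show σ + (s : ℤ) = τ by omega] at this
  · have hG := key s le_rfl
    rw [Gaux_closed] at hG
    refine hG.trans (le_of_eq ?_)
    have heq1 : ∏ m ∈ Finset.range s, (α (σ + (m : ℤ)) + K * a (σ + (m : ℤ)))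
        = ∏ r ∈ Finset.Ico σ τ, (α r + K * a r) := by
      rw [Finset.range_eq_Ico, ← prod_shift (fun r => α r + K * a r) σ 0 s,
        show σ + ((0:ℕ) : ℤ) = σ by norm_num, show σ + ((s:ℕ) : ℤ) = τ by omega]
    have heq2 : ∀ m ∈ Finset.range s,
        (K * b (σ + (m : ℤ))) * ∏ r ∈ Finset.Ico (m + 1) s,
            (α (σ + (r : ℤ)) + K * a (σ + (r : ℤ)))
        = K * ((fun t => b t * ∏ r ∈ Finset.Ico (t + 1) τ, (α r + K * a r)) (σ + (m : ℤ))) := by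
      intro m hm
      have hp : ∏ r ∈ Finset.Ico (σ + (m : ℤ) + 1) τ, (α r + K * a r)
          = ∏ r ∈ Finset.Ico (m + 1) s, (α (σ + (r : ℤ)) + K * a (σ + (r : ℤ))) := by
        rw [← prod_shift (fun r => α r + K * a r) σ (m + 1) s,
          show σ + ((m + 1 : ℕ) : ℤ) = σ + (m : ℤ) + 1 by push_cast; ring,
          show σ + ((s:ℕ) : ℤ) = τ by omega]
      simp only [hp]
      ring
    rw [Finset.sum_congr rfl heq2, ← Finset.mul_sum, heq1, Finset.range_eq_Ico,
      ← sum_shift (fun t => b t * ∏ r ∈ Finset.Ico (t + 1) τ, (α r + K * a r)) σ 0 s]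
    have he : σ + ((0:ℕ) : ℤ) = σ := by omega
    have he2 : σ + ((s:ℕ) : ℤ) = τ := by omega
    rw [he, he2]
    ring

/-- pullback absorbing sets of semilinear difference equations
(Proposition 2 of the paper). -/
theorem pullback_absorbing_set
    {X : Type*} [NormedAddCommGroup X] [NormedSpace ℝ X] [CompleteSpace X]
    -- discrete interval I, unbounded below
    (I : Set ℤ) (hI : ∀ ⦃a b c : ℤ⦄, a ∈ I → c ∈ I → a ≤ b → b ≤ c → b ∈ I)
    (hIlb : ∀ t : ℤ, ∃ s ∈ I, s ≤ t)
    (ρ : ℝ) (hρ : 0 < ρ)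
    -- semilinear right-hand side F_t = L_t + N_t : U_t → U_{t+1}
    (U : ℤ → Set X) (hUcl : ∀ t ∈ I, IsClosed (U t))
    (L : ℤ → X →L[ℝ] X) (N : ℤ → X → X)
    (hNcont : ∀ t, t ∈ I → t + 1 ∈ I → ContinuousOn (N t) (U t))
    (F : ℤ → X → X)
    (hF : ∀ t, t ∈ I → t + 1 ∈ I → ∀ u ∈ U t, F t u = L t u + N t u)
    (hFmap : ∀ t, t ∈ I → t + 1 ∈ I → ∀ u ∈ U t, F t u ∈ U (t + 1))
    (K : ℝ) (hK : 1 ≤ K) (α : ℤ → ℝ) (hα : ∀ t, 0 ≤ α t)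
    (hΦ : ∀ s t : ℤ, s ∈ I → t ∈ I → s ≤ t →
      ‖transOp L s (t - s).toNat‖ ≤ K * ∏ r ∈ Finset.Ico s t, α r)
    (a b : ℤ → ℝ) (ha : ∀ t, 0 ≤ a t) (hb : ∀ t, 0 ≤ b t)
    (hN : ∀ t, t ∈ I → t + 1 ∈ I → ∀ u ∈ U t, ‖N t u‖ ≤ b t + a t * ‖u‖)
    -- limit relations
    (hlim : ∀ τ ∈ I,
      Tendsto (fun s : ℕ => ∏ r ∈ Finset.Ico (τ - (s : ℤ)) τ, (α r + K * a r)) atTop (𝓝 0))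
    (R : ℤ → ℝ)
    (hR : ∀ τ ∈ I,
      Tendsto (fun n : ℕ =>
          K * ∑ s ∈ Finset.Ico (τ - (n : ℤ)) τ,
            b s * ∏ r ∈ Finset.Ico (s + 1) τ, (α r + K * a r))
        atTop (𝓝 (R τ))) :
    -- (Δ) is pullback dissipative with absorbing set 𝓐(τ) = {u ∈ U_τ : ‖u‖ ≤ ρ + R_τ}
    (∀ τ ∈ I, ∀ B : ℤ → Set X, (∀ t ∈ I, B t ⊆ U t) →
      (∃ C : ℝ, ∀ t ∈ I, ∀ u ∈ B t, ‖u‖ ≤ C) →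
      ∃ S : ℕ, ∀ s : ℕ, S ≤ s →
        ∀ u ∈ B (τ - (s : ℤ)), phi F τ (τ - (s : ℤ)) u ∈ U τ ∧ ‖phi F τ (τ - (s : ℤ)) u‖ ≤ ρ + R τ) ∧
    -- uniform version
    ((∀ ε : ℝ, 0 < ε → ∃ S : ℕ, ∀ s : ℕ, S ≤ s → ∀ τ ∈ I,
        ∏ r ∈ Finset.Ico (τ - (s : ℤ)) τ, (α r + K * a r) < ε) →
      ∀ B : ℤ → Set X, (∀ t ∈ I, B t ⊆ U t) →
        (∃ C : ℝ, ∀ t ∈ I, ∀ u ∈ B t, ‖u‖ ≤ C) →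
        ∃ S : ℕ, ∀ τ ∈ I, ∀ s : ℕ, S ≤ s →
          ∀ u ∈ B (τ - (s : ℤ)), phi F τ (τ - (s : ℤ)) u ∈ U τ ∧ ‖phi F τ (τ - (s : ℤ)) u‖ ≤ ρ + R τ) := by
  have hK0 : (0:ℝ) ≤ K := le_trans zero_le_one hK
  have hc : ∀ r : ℤ, 0 ≤ α r + K * a r := fun r => add_nonneg (hα r) (mul_nonneg hK0 (ha r))
  have hdown : ∀ τ ∈ I, ∀ t : ℤ, t ≤ τ → t ∈ I := by
    intro τ hτ t ht
    obtain ⟨s₀, hs₀, hs₀le⟩ := hIlb t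
    exact hI hs₀ hτ hs₀le ht
  have hphi : ∀ (τ : ℤ) (s : ℕ) (u : X), phi F τ (τ - (s : ℤ)) u = sol F (τ - (s : ℤ)) u s := by
    intro τ s u
    unfold phi
    rw [show (τ - (τ - (s : ℤ))).toNat = s by omega]
  have hPnn : ∀ (τ : ℤ) (s : ℕ),
      (0:ℝ) ≤ ∏ r ∈ Finset.Ico (τ - (s : ℤ)) τ, (α r + K * a r) := fun τ s =>
    Finset.prod_nonneg fun r _ => hc r
  -- sum bound by R τ
  have hsumR : ∀ τ ∈ I, ∀ s : ℕ,
      K * ∑ t ∈ Finset.Ico (τ - (s : ℤ)) τ,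
          b t * ∏ r ∈ Finset.Ico (t + 1) τ, (α r + K * a r) ≤ R τ := by
    intro τ hτ s
    refine ge_of_tendsto (hR τ hτ) (eventually_atTop.2 ⟨s, fun n hn => ?_⟩)
    refine mul_le_mul_of_nonneg_left ?_ hK0
    refine Finset.sum_le_sum_of_subset_of_nonneg (Finset.Ico_subset_Ico (by omega) le_rfl) ?_
    intro t _ _
    exact mul_nonneg (hb t) (Finset.prod_nonneg fun r _ => hc r)
  constructor
  · intro τ hτ B hBU ⟨C, hC⟩
    set C' := max C 0 with hC'
    have htend : Tendsto (fun s : ℕ =>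
        K * (∏ r ∈ Finset.Ico (τ - (s : ℤ)) τ, (α r + K * a r)) * C') atTop (𝓝 0) := by
      have := ((hlim τ hτ).const_mul K).mul_const C'
      simpa using this
    obtain ⟨S, hS⟩ := eventually_atTop.1 (htend.eventually (gt_mem_nhds hρ))
    refine ⟨S, fun s hs u hu => ?_⟩
    have hτs : (τ - (s : ℤ)) ∈ I := hdown τ hτ _ (by omega)
    have huU : u ∈ U (τ - (s : ℤ)) := hBU _ hτs hu
    have hcore := core I U L N F hF hFmap K hK α hα hΦ a b ha hb hN τ hτ (hdown τ hτ) s u huU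
    rw [hphi]
    refine ⟨hcore.1, hcore.2.trans ?_⟩
    have hu' : ‖u‖ ≤ C' := (hC _ hτs u hu).trans (le_max_left _ _)
    have h1 : K * (∏ r ∈ Finset.Ico (τ - (s : ℤ)) τ, (α r + K * a r)) * ‖u‖
        ≤ K * (∏ r ∈ Finset.Ico (τ - (s : ℤ)) τ, (α r + K * a r)) * C' :=
      mul_le_mul_of_nonneg_left hu' (mul_nonneg hK0 (hPnn τ s))
    have := hS s hs
    have := hsumR τ hτ s
    linarith
  · intro hunif B hBU ⟨C, hC⟩
    set C' := max C 0 with hC'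
    have hC'0 : 0 ≤ C' := le_max_right _ _
    have hden : (0:ℝ) < K * (C' + 1) := by nlinarith
    obtain ⟨S, hS⟩ := hunif (ρ / (K * (C' + 1))) (div_pos hρ hden)
    refine ⟨S, fun τ hτ s hs u hu => ?_⟩
    have hτs : (τ - (s : ℤ)) ∈ I := hdown τ hτ _ (by omega)
    have huU : u ∈ U (τ - (s : ℤ)) := hBU _ hτs hu
    have hcore := core I U L N F hF hFmap K hK α hα hΦ a b ha hb hN τ hτ (hdown τ hτ) s u huU
    rw [hphi]
    refine ⟨hcore.1, hcore.2.trans ?_⟩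
    have hu' : ‖u‖ ≤ C' := (hC _ hτs u hu).trans (le_max_left _ _)
    have hP := hS s hs τ hτ
    have h1 : K * (∏ r ∈ Finset.Ico (τ - (s : ℤ)) τ, (α r + K * a r)) * ‖u‖
        ≤ K * (ρ / (K * (C' + 1))) * C' := by
      calc K * (∏ r ∈ Finset.Ico (τ - (s : ℤ)) τ, (α r + K * a r)) * ‖u‖
          ≤ K * (∏ r ∈ Finset.Ico (τ - (s : ℤ)) τ, (α r + K * a r)) * C' :=
            mul_le_mul_of_nonneg_left hu' (mul_nonneg hK0 (hPnn τ s))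
        _ ≤ K * (ρ / (K * (C' + 1))) * C' := by
            refine mul_le_mul_of_nonneg_right (mul_le_mul_of_nonneg_left hP.le hK0) hC'0
    have h2 : K * (ρ / (K * (C' + 1))) * C' ≤ ρ := by
      rw [div_eq_mul_inv]
      have hinv : 0 < (K * (C' + 1))⁻¹ := inv_pos.2 hden
      have : K * (ρ * (K * (C' + 1))⁻¹) * C' = ρ * ((K * C') * (K * (C' + 1))⁻¹) := by ring
      rw [this]
      have hle : (K * C') * (K * (C' + 1))⁻¹ ≤ 1 := by
        rw [← le_div_iff₀ hinv] at *
        · rw [one_div, inv_inv]; nlinarith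
      nlinarith
    have := hsumR τ hτ s
    linarith
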